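/- Let σ : ℝ → ℝ be continuous, let κ, w, u ∈ ℝ, and let I be an interval with u ∈ I on which D(t) := 1 − (w/2)∫ₜ^u e^{−κ(u−s)} σ(s)² ds never vanishes. Define φ(t) := e^{−κ(u−t)} w / D(t) for t ∈ I. Then φ(u) = w and φ satisfies the Riccati differential equation φ'(t) = κ φ(t) − (σ(t)²/2) φ(t)² for all t ∈ I. (This is the exponent φ(w,u,t) in the Fourier transform E_{t,x}[e^{w X_u}] = e^{ϕ(w,u,t) + x φ(w,u,t)} of the time-inhomogeneous square-root diffusion dX_t = κ(θ − X_t)dt + σ(t)√X_t dB_t.) -/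

import Mathlib

open intervalIntegral Real

/-- The exponent `φ(w,u,t) = e^{−κ(u−t)} w / (1 − (w/2)∫ₜ^u e^{−κ(u−s)} σ(s)² ds)`
of the conditional Fourier transform of the time-inhomogeneous square-root
diffusion. -/
noncomputable def phi (σ : ℝ → ℝ) (κ w u t : ℝ) : ℝ :=
  Real.exp (-κ * (u - t)) * w /
    (1 - w / 2 * ∫ s in t..u, Real.exp (-κ * (u - s)) * σ s ^ 2)

/-- On an interval `I ∋ u` where the denominator
`D(t) = 1 − (w/2)∫ₜ^u e^{−κ(u−s)} σ(s)² ds` does not vanish, `φ` satisfies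
`φ(u) = w` and the Riccati equation `φ'(t) = κ φ(t) − (σ(t)²/2) φ(t)²`. -/
theorem stmt_19 (σ : ℝ → ℝ) (hσ : Continuous σ) (κ w u : ℝ)
    (I : Set ℝ) (hI : I.OrdConnected) (hu : u ∈ I)
    (hD : ∀ t ∈ I,
      (1 - w / 2 * ∫ s in t..u, Real.exp (-κ * (u - s)) * σ s ^ 2) ≠ 0) :
    phi σ κ w u u = w ∧
      ∀ t ∈ I, HasDerivAt (phi σ κ w u)
        (κ * phi σ κ w u t - σ t ^ 2 / 2 * phi σ κ w u t ^ 2) t := by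
  have hf : Continuous fun s => Real.exp (-κ * (u - s)) * σ s ^ 2 := by
    exact (Real.continuous_exp.comp (by continuity)).mul (hσ.pow 2)
  constructor
  · simp [phi]
  · intro t ht
    set D : ℝ := 1 - w / 2 * ∫ s in t..u, Real.exp (-κ * (u - s)) * σ s ^ 2 with hDdef
    have hDne : D ≠ 0 := hD t ht
    -- derivative of numerator
    have hN : HasDerivAt (fun t => Real.exp (-κ * (u - t)) * w)
        (Real.exp (-κ * (u - t)) * κ * w) t := by
      have h1 : HasDerivAt (fun t => -κ * (u - t)) (-κ * (-1)) t :=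
        ((hasDerivAt_id t).const_sub u).const_mul (-κ)
      have := (h1.exp).mul_const w
      refine this.congr_deriv ?_
      ring
    -- derivative of integral
    have hInt : HasDerivAt (fun t => ∫ s in t..u, Real.exp (-κ * (u - s)) * σ s ^ 2)
        (-(Real.exp (-κ * (u - t)) * σ t ^ 2)) t := by
      exact intervalIntegral.integral_hasDerivAt_left
        (hf.intervalIntegrable t u)
        (hf.stronglyMeasurableAtFilter _ _)
        hf.continuousAt
    have hDen : HasDerivAt (fun t => 1 - w / 2 * ∫ s in t..u,
        Real.exp (-κ * (u - s)) * σ s ^ 2)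
        (w / 2 * (Real.exp (-κ * (u - t)) * σ t ^ 2)) t := by
      have := (hInt.const_mul (w / 2)).const_sub 1
      refine this.congr_deriv ?_
      ring
    have hdiv := hN.div hDen hDne
    refine HasDerivAt.congr_deriv (f := phi σ κ w u) hdiv ?_
    simp only [phi, ← hDdef]
    field_simp
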